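/- Let x* be the unique fixed point of the λ-discounted projected one-step update g^(λ) with λ ∈ (1 - 1/(t⁺ + ‖x*‖₁), 1), and suppose an integral switching flow z exists. Then the discounted flow y defined by y(v,s₀(v)) = λh₀(x*'_v), y(v,s₁(v)) = λh₁(x*'_v) (with x*' the extension of x* by the token numbers on T) satisfies Σ_{v∈T} y⁻(v) > t⁺ - 1. -/
import Mathlib


open Finset

noncomputable def h0 (x : ℝ) : ℝ := min (x - ⌊x / 2⌋) ⌈x / 2⌉
noncomputable def h1 (x : ℝ) : ℝ := max (⌊x / 2⌋ : ℝ) (x - ⌈x / 2⌉)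

/-- One-step update of the switch graph `(V, s0, s1)`. -/
noncomputable def oneStep {V : Type*} [Fintype V] [DecidableEq V]
    (s0 s1 : V → V) (x : V → ℝ) : V → ℝ :=
  fun v => (∑ u : V, if s0 u = v then h0 (x u) else 0)
    + (∑ u : V, if s1 u = v then h1 (x u) else 0)

/-- Outflow of `v` in an edge flow `y`, where `y v false` is the value on the
    even out-edge `(v, s0 v)` and `y v true` on the odd out-edge `(v, s1 v)`. -/
def outflowR {V : Type*} (y : V → Bool → ℝ) (v : V) : ℝ := y v false + y v true

/-- Inflow of `v` in an edge flow `y`. -/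
def inflowR {V : Type*} [Fintype V] [DecidableEq V]
    (s0 s1 : V → V) (y : V → Bool → ℝ) (v : V) : ℝ :=
  (∑ u : V, if s0 u = v then y u false else 0)
    + (∑ u : V, if s1 u = v then y u true else 0)

lemma h0_add_h1 (x : ℝ) : h0 x + h1 x = x := by
  unfold h0 h1
  rcases le_total (x - ⌊x / 2⌋) ((⌈x / 2⌉ : ℝ)) with h | h
  · rw [min_eq_left h, max_eq_left (by linarith)]; ring
  · rw [min_eq_right h, max_eq_right (by linarith)]; ring

theorem discounted_fixed_point_terminal_inflow
    {V : Type*} [Fintype V] [DecidableEq V]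
    (s0 s1 : V → V) (T : Finset V) (hT : T.Nonempty)
    (t : V → ℕ) (htot : 1 ≤ ∑ v ∈ T, t v)
    (xstar : V → ℝ) (hxstar : ∀ v, 0 ≤ xstar v)
    (ext : V → ℝ) (hext : ∀ v, ext v = if v ∈ T then (t v : ℝ) else xstar v)
    (lam : ℝ)
    (hlam : 1 - 1 / ((∑ v ∈ T, t v : ℕ) + ∑ v ∈ Tᶜ, |xstar v|) < lam)
    (hlam1 : lam < 1)
    (hfix : ∀ v ∉ T, lam * oneStep s0 s1 ext v = xstar v)
    (y : V → Bool → ℝ)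
    (hy : ∀ v, y v false = lam * h0 (ext v) ∧ y v true = lam * h1 (ext v))
    (z : V → Bool → ℕ)
    (hzswitch : ∀ v, z v true ≤ z v false ∧ z v false ≤ z v true + 1)
    (hzcons : ∀ v ∉ T, (z v false + z v true : ℕ) =
      (∑ u : V, if s0 u = v then z u false else 0)
        + (∑ u : V, if s1 u = v then z u true else 0))
    (hzterm : ∀ v ∈ T, (z v false + z v true : ℕ) = t v) :
    ((∑ v ∈ T, t v : ℕ) : ℝ) - 1 < ∑ v ∈ T, inflowR s0 s1 y v := by
  set tT : ℝ := ((∑ v ∈ T, t v : ℕ) : ℝ) with htT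
  set S : ℝ := ∑ v ∈ Tᶜ, xstar v with hS
  have habs : ∑ v ∈ Tᶜ, |xstar v| = S := by
    apply Finset.sum_congr rfl; intro v _; exact abs_of_nonneg (hxstar v)
  rw [habs] at hlam
  have hS0 : 0 ≤ S := Finset.sum_nonneg fun v _ => hxstar v
  have htT1 : (1 : ℝ) ≤ tT := by rw [htT]; exact_mod_cast htot
  -- inflow at non-terminals equals xstar
  have hinT : ∀ v ∉ T, inflowR s0 s1 y v = xstar v := by
    intro v hv
    rw [← hfix v hv]
    unfold inflowR oneStep
    rw [mul_add, Finset.mul_sum, Finset.mul_sum]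
    congr 1
    · refine Finset.sum_congr rfl fun u _ => ?_
      rw [(hy u).1, mul_ite, mul_zero]
    · refine Finset.sum_congr rfl fun u _ => ?_
      rw [(hy u).2, mul_ite, mul_zero]
  -- total inflow
  have htotin : ∑ v : V, inflowR s0 s1 y v = lam * (tT + S) := by
    unfold inflowR
    rw [Finset.sum_add_distrib]
    have A : (∑ v : V, ∑ u : V, if s0 u = v then y u false else 0) = ∑ u : V, y u false := by
      rw [Finset.sum_comm]; simp
    have B : (∑ v : V, ∑ u : V, if s1 u = v then y u true else 0) = ∑ u : V, y u true := by
      rw [Finset.sum_comm]; simp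
    rw [A, B, ← Finset.sum_add_distrib]
    have : ∀ u : V, y u false + y u true = lam * ext u := by
      intro u; rcases hy u with ⟨a, b⟩; rw [a, b, ← mul_add, h0_add_h1]
    rw [Finset.sum_congr rfl fun u _ => this u, ← Finset.mul_sum]
    congr 1
    rw [← Finset.sum_add_sum_compl T]
    congr 1
    · rw [htT, Nat.cast_sum]; apply Finset.sum_congr rfl; intro v hv
      rw [hext v, if_pos hv]
    · apply Finset.sum_congr rfl; intro v hv
      rw [hext v, if_neg (Finset.mem_compl.mp hv)]
  have hsplit : ∑ v ∈ T, inflowR s0 s1 y v = lam * (tT + S) - S := by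
    have := Finset.sum_add_sum_compl T (inflowR s0 s1 y)
    rw [htotin] at this
    have hc : ∑ v ∈ Tᶜ, inflowR s0 s1 y v = S := by
      apply Finset.sum_congr rfl; intro v hv
      exact hinT v (Finset.mem_compl.mp hv)
    linarith
  rw [hsplit]
  have hD : 0 < tT + S := by linarith
  have hkey : (1 - 1 / (tT + S)) * (tT + S) < lam * (tT + S) :=
    mul_lt_mul_of_pos_right hlam hD
  have hinv : (1 / (tT + S)) * (tT + S) = 1 := by
    field_simp
  nlinarith
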